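/- Let (u,K) be a Griffith almost-minimizer in Ω with gauge h(t) = c_h t^α. Let x₀ ∈ K, r₀ > 0, ε₀ > 0 be such that 200 A ε₀ ≤ τ, K satisfies Hypothesis-H(ε₀,x₀,r₀) and h(r₀) ≤ 1 (here τ, A are the universal constants of the bad-mass construction). Let (B_i)_{i∈I} be a countable family of pairwise disjoint balls B_i = B(x_i, r_i) with x_i ∈ K ∩ closure(B(x₀,3r₀/4)), r_i = A d(x_i) > 0, and R(x₀,r₀) ⊆ ⋃_i B(x_i, 4 r_i). Define δ : K ∩ closure(B(x₀,3r₀/4)) → [0,∞) by δ(x) := min( inf_{i∈I} ( |x − x_i| + r_i ), dist( x, K \ ⋃_i B(x_i, 9 r_i) ) ). Then: δ is 1-Lipschitz; δ(x_k) = r_k for every k ∈ I; δ(x) ≤ max_k (10 r_k) ≤ r₀/4 for every x ∈ K ∩ closure(B(x₀,3r₀/4)); and β_K(x,r) ≤ 4τ for every x ∈ K ∩ closure(B(x₀,3r₀/4)) and every r ∈ (δ(x), r₀/4]. In particular δ is a geometric function with parameters (3r₀/4, 4τ). -/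

import Mathlib

open Metric MeasureTheory Set Filter
open scoped RealInnerProductSpace ENNReal NNReal Topology

noncomputable section

abbrev Euc (N : ℕ) := EuclideanSpace ℝ (Fin N)

variable {N : ℕ}

/-- Affine hyperplane through `x` with normal `ν`. -/
def hplane (x ν : Euc N) : Set (Euc N) := {y | (inner ℝ (y - x) ν : ℝ) = 0}

/-- Bilateral flatness `β_K(x,r)`. -/
def flatness (K : Set (Euc N)) (x : Euc N) (r : ℝ) : ℝ :=
  r⁻¹ * ⨅ ν : {ν : Euc N // ‖ν‖ = 1},
    max (⨆ y : ↥(K ∩ ball x r), infDist (y : Euc N) (hplane x ν.1))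
        (⨆ y : ↥(hplane x ν.1 ∩ ball x r), infDist (y : Euc N) K)

/-- `K` is relatively closed in `Ω`. -/
def RelClosedIn (K Ω : Set (Euc N)) : Prop := K ⊆ Ω ∧ closure K ∩ Ω ⊆ K

/-- Connected component of `B(x₀,r₀) \ K` containing `x₀ + (3/4) r₀ ν`. -/
def posCompo (K : Set (Euc N)) (x₀ : Euc N) (r₀ : ℝ) (ν : Euc N) : Set (Euc N) :=
  connectedComponentIn (ball x₀ r₀ \ K) (x₀ + (3 / 4 * r₀) • ν)

/-- Connected component of `B(x₀,r₀) \ K` containing `x₀ - (3/4) r₀ ν`. -/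
def negCompo (K : Set (Euc N)) (x₀ : Euc N) (r₀ : ℝ) (ν : Euc N) : Set (Euc N) :=
  connectedComponentIn (ball x₀ r₀ \ K) (x₀ - (3 / 4 * r₀) • ν)

/-- `K` separates in `B(x₀,r₀)` with respect to the hyperplane through `x₀` of unit normal `ν`. -/
def SeparatesWith (K : Set (Euc N)) (x₀ : Euc N) (r₀ : ℝ) (ν : Euc N) : Prop :=
  ‖ν‖ = 1 ∧
  (∀ y ∈ K ∩ ball x₀ r₀, infDist y (hplane x₀ ν) ≤ r₀ / 2) ∧
  ball (x₀ + (3 / 4 * r₀) • ν) (r₀ / 4) ⊆ posCompo K x₀ r₀ ν ∧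
  ball (x₀ - (3 / 4 * r₀) • ν) (r₀ / 4) ⊆ negCompo K x₀ r₀ ν ∧
  posCompo K x₀ r₀ ν ≠ negCompo K x₀ r₀ ν

/-- `K` separates in `B(x₀,r₀)`. -/
def Separates (K : Set (Euc N)) (x₀ : Euc N) (r₀ : ℝ) : Prop := ∃ ν, SeparatesWith K x₀ r₀ ν

/-- The symmetrized gradient `e(u) = (Du + Duᵀ)/2`. -/
def symGrad (u : Euc N → Euc N) (x : Euc N) (i j : Fin N) : ℝ :=
  (fderiv ℝ u x (EuclideanSpace.single j 1) i + fderiv ℝ u x (EuclideanSpace.single i 1) j) / 2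

/-- `|e(u)|²`. -/
def eDensity (u : Euc N → Euc N) (x : Euc N) : ℝ := ∑ i, ∑ j, (symGrad u x i j) ^ 2

/-- Elastic energy `∫_S |e(u)|² dx`. -/
def energy (u : Euc N → Euc N) (S : Set (Euc N)) : ℝ := ∫ x in S, eDensity u x

/-- Admissible pair `(u,K)` in `Ω`. -/
def Admissible (Ω : Set (Euc N)) (u : Euc N → Euc N) (K : Set (Euc N)) : Prop :=
  RelClosedIn K Ω ∧ DifferentiableOn ℝ u (Ω \ K) ∧ LocallyIntegrableOn (eDensity u) (Ω \ K)

/-- `K` is coral. -/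
def Coral (K : Set (Euc N)) : Prop := ∀ x ∈ K, ∀ r > 0, 0 < μH[(N : ℝ) - 1] (K ∩ ball x r)

/-- `(v,L)` is a competitor of `(u,K)` in `B(x,r)`. -/
def Competitor (Ω : Set (Euc N)) (u : Euc N → Euc N) (K : Set (Euc N)) (x : Euc N) (r : ℝ)
    (v : Euc N → Euc N) (L : Set (Euc N)) : Prop :=
  Admissible Ω v L ∧ L \ ball x r = K \ ball x r ∧
  ∀ᵐ y ∂(volume : Measure (Euc N)), y ∈ Ω \ (K ∪ ball x r) → v y = u y

/-- `(u,K)` is a Griffith almost-minimizer with gauge `h` in `Ω`. -/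
def GriffithAM (Ω : Set (Euc N)) (h : ℝ → ℝ) (u : Euc N → Euc N) (K : Set (Euc N)) : Prop :=
  Admissible Ω u K ∧ Coral K ∧
  ∀ x r, 0 < r → closure (ball x r) ⊆ Ω →
    ∀ v L, Competitor Ω u K x r v L →
      ENNReal.ofReal (energy u (ball x r \ K)) + μH[(N : ℝ) - 1] (K ∩ ball x r) ≤
      ENNReal.ofReal (energy v (ball x r \ L)) + μH[(N : ℝ) - 1] (L ∩ ball x r) +
        ENNReal.ofReal (h r * r ^ (N - 1))

/-- Normalized energy `ω_u(x,r)`. -/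
def nenergy (u : Euc N → Euc N) (K : Set (Euc N)) (x : Euc N) (r : ℝ) : ℝ :=
  energy u (ball x r \ K) / r ^ (N - 1)

/-- A deformation of `E` in the ball `B`, inside the ambient open set `Ω`. -/
def IsDeformation (Ω E B : Set (Euc N)) (f : Euc N → Euc N) : Prop :=
  (∃ L : ℝ≥0, LipschitzOnWith L f E) ∧ f '' E ⊆ Ω ∧ f '' (E ∩ B) ⊆ B ∧
  IsCompact (closure {x | x ∈ E ∧ f x ≠ x}) ∧ closure {x | x ∈ E ∧ f x ≠ x} ⊆ B

/-- `F` is a topological competitor of `E` in the ball `B`. -/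
def TopCompetitor (Ω E B F : Set (Euc N)) : Prop :=
  ∃ f, IsDeformation Ω E B f ∧ F = f '' E

/-- `E` is an almost-minimal set in `V` with gauge `g`. -/
def AlmostMinimalSet (V : Set (Euc N)) (g : ℝ → ℝ≥0∞) (E : Set (Euc N)) : Prop :=
  RelClosedIn E V ∧ (∀ x ∈ V, ∃ r > 0, μH[(N : ℝ) - 1] (E ∩ ball x r) < ⊤) ∧
  ∀ x ∈ E, ∀ r, 0 < r → ball x r ⊆ V →
    ∀ f : Euc N → Euc N, IsDeformation V E (ball x r) f →
      μH[(N : ℝ) - 1] (E ∩ ball x r) ≤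
        μH[(N : ℝ) - 1] (f '' (E ∩ ball x r)) + g r * ENNReal.ofReal (r ^ (N - 1))

/-- `E` is a minimal set in `V`. -/
def MinimalSet (V E : Set (Euc N)) : Prop := AlmostMinimalSet V (fun _ => 0) E

/-- Hypothesis `H(ε₀, x₀, r₀)`. -/
def HypH (Ω K : Set (Euc N)) (ε₀ : ℝ) (x₀ : Euc N) (r₀ : ℝ) : Prop :=
  ball x₀ r₀ ⊆ Ω ∧ Separates K x₀ r₀ ∧ flatness K x₀ r₀ ≤ ε₀

/-- Geometric function with parameters `(ρ, τ)`. -/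
def GeomFn (K : Set (Euc N)) (x₀ : Euc N) (r₀ ρ τ : ℝ) (δ : Euc N → ℝ) : Prop :=
  LipschitzOnWith 100 δ (K ∩ closure (ball x₀ ρ)) ∧
  (∀ x ∈ K ∩ closure (ball x₀ ρ), δ x ∈ Icc 0 (r₀ / 4)) ∧
  ∀ x ∈ K ∩ closure (ball x₀ ρ), ∀ r ∈ Ioc (δ x) (r₀ / 4), flatness K x r ≤ τ

/-- The stopping distance `d(x)` of the bad-mass construction. -/
def stopR (τ : ℝ) (K : Set (Euc N)) (r₀ : ℝ) (x : Euc N) : ℝ :=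
  sInf {r : ℝ | 0 < r ∧ ∀ t ∈ Icc r (r₀ / 4), flatness K x t ≤ τ}

/-- The bad region `R(x₀,r₀)`. -/
def badRegion (τ A : ℝ) (K : Set (Euc N)) (x₀ : Euc N) (r₀ : ℝ) : Set (Euc N) :=
  ⋃ x ∈ K ∩ closure (ball x₀ (3 * r₀ / 4)),
    ⋃ (_ : 0 < stopR τ K r₀ x), ball x (A * stopR τ K r₀ x)

/-- The bad mass `m_K(x₀,r₀)`. -/
def badMass (τ A : ℝ) (K : Set (Euc N)) (x₀ : Euc N) (r₀ : ℝ) : ℝ :=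
  (μH[(N : ℝ) - 1] (K ∩ badRegion τ A K x₀ r₀)).toReal / r₀ ^ (N - 1)

end

/-! ### Auxiliary lemmas -/

noncomputable section Aux

variable {N : ℕ}

/-- The inner infimum of the flatness. -/
def flatInner (K : Set (Euc N)) (x : Euc N) (r : ℝ) : ℝ :=
  ⨅ ν : {ν : Euc N // ‖ν‖ = 1},
    max (⨆ y : ↥(K ∩ ball x r), infDist (y : Euc N) (hplane x ν.1))
        (⨆ y : ↥(hplane x ν.1 ∩ ball x r), infDist (y : Euc N) K)

lemma flatness_eq (K : Set (Euc N)) (x : Euc N) (r : ℝ) :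
    flatness K x r = r⁻¹ * flatInner K x r := rfl

lemma mem_hplane_self (x ν : Euc N) : x ∈ hplane x ν := by
  simp [hplane]

lemma unit_nonempty (hN : 0 < N) : Nonempty {ν : Euc N // ‖ν‖ = 1} :=
  ⟨⟨EuclideanSpace.single ⟨0, hN⟩ (1 : ℝ), by
    rw [EuclideanSpace.norm_single]; norm_num⟩⟩

lemma flatInner_nonneg (K : Set (Euc N)) (x : Euc N) (r : ℝ) :
    0 ≤ flatInner K x r :=
  Real.iInf_nonneg fun _ =>
    (Real.iSup_nonneg fun _ => infDist_nonneg).trans (le_max_left _ _)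

lemma le_infDist' {s : Set (Euc N)} {x : Euc N} {b : ℝ} (hs : s.Nonempty)
    (h : ∀ z ∈ s, b ≤ dist x z) : b ≤ infDist x s := by
  by_contra hb
  push_neg at hb
  obtain ⟨z, hz, hlt⟩ := (infDist_lt_iff hs).1 hb
  exact absurd (h z hz) (not_le.2 hlt)

lemma infDist_hplane {x ν : Euc N} (hν : ‖ν‖ = 1) (y : Euc N) :
    infDist y (hplane x ν) = |⟪y - x, ν⟫| := by
  apply le_antisymm
  · have hmem : y - ⟪y - x, ν⟫ • ν ∈ hplane x ν := by
      show ⟪y - ⟪y - x, ν⟫ • ν - x, ν⟫ = 0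
      have : y - ⟪y - x, ν⟫ • ν - x = (y - x) - ⟪y - x, ν⟫ • ν := by abel
      rw [this, inner_sub_left, real_inner_smul_left, real_inner_self_eq_norm_sq, hν]
      ring
    refine (infDist_le_dist_of_mem hmem).trans (le_of_eq ?_)
    rw [dist_eq_norm]
    have : y - (y - ⟪y - x, ν⟫ • ν) = ⟪y - x, ν⟫ • ν := by abel
    rw [this, norm_smul, Real.norm_eq_abs, hν, mul_one]
  · refine le_infDist' ⟨x, mem_hplane_self x ν⟩ fun z hz => ?_
    have hz0 : ⟪z - x, ν⟫ = 0 := hz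
    have : ⟪y - x, ν⟫ = ⟪y - z, ν⟫ := by
      have hd : y - x = (y - z) + (z - x) := by abel
      rw [hd, inner_add_left, hz0, add_zero]
    rw [this, dist_eq_norm]
    calc |⟪y - z, ν⟫| ≤ ‖y - z‖ * ‖ν‖ := abs_real_inner_le_norm _ _
      _ = ‖y - z‖ := by rw [hν, mul_one]

lemma flatInner_le_max (hN : 0 < N) (K : Set (Euc N)) (x : Euc N) (r : ℝ)
    (ν : {ν : Euc N // ‖ν‖ = 1}) :
    flatInner K x r ≤
      max (⨆ y : ↥(K ∩ ball x r), infDist (y : Euc N) (hplane x ν.1))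
        (⨆ y : ↥(hplane x ν.1 ∩ ball x r), infDist (y : Euc N) K) := by
  refine ciInf_le ⟨0, ?_⟩ ν
  rintro v ⟨μ, rfl⟩
  exact (Real.iSup_nonneg fun _ => infDist_nonneg).trans (le_max_left _ _)

lemma abs_sub_le_abs_add_abs (a b : ℝ) : |a - b| ≤ |a| + |b| := by
  rw [sub_eq_add_neg]
  exact (abs_add_le _ _).trans (by rw [abs_neg])

/-- Transfer of flatness from a larger ball to a smaller one. -/
lemma flatInner_transfer (hN : 0 < N) (K : Set (Euc N)) {x x' : Euc N} {r r' : ℝ}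
    (hxK : x ∈ K) (hx'K : x' ∈ K) (hr : 0 < r) (hsub : dist x x' + r ≤ r') :
    flatInner K x r ≤ 2 * flatInner K x' r' := by
  have hnu : Nonempty {ν : Euc N // ‖ν‖ = 1} := unit_nonempty hN
  have hdist : (0 : ℝ) ≤ dist x x' := dist_nonneg
  have hr' : 0 < r' := lt_of_lt_of_le (by linarith) hsub
  set e := flatInner K x' r' with he
  have he0 : 0 ≤ e := flatInner_nonneg K x' r'
  refine le_of_forall_pos_le_add fun ε hε => ?_
  set D := e + ε / 2 with hD
  have hD0 : 0 < D := by positivity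
  have hMlt : flatInner K x' r' < D := by rw [hD]; linarith
  rw [show flatInner K x' r' = _ from rfl] at hMlt
  obtain ⟨ν₀, hν₀⟩ := exists_lt_of_ciInf_lt hMlt
  have hune : ‖ν₀.1‖ = 1 := ν₀.2
  -- the supremum over K ∩ B(x',r') is bounded
  have bdd1 : BddAbove (Set.range fun y : ↥(K ∩ ball x' r') =>
      infDist (y : Euc N) (hplane x' ν₀.1)) := by
    refine ⟨r', ?_⟩
    rintro v ⟨y, rfl⟩
    exact (infDist_le_dist_of_mem (mem_hplane_self x' ν₀.1)).trans (le_of_lt y.2.2)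
  have bdd2 : BddAbove (Set.range fun z : ↥(hplane x' ν₀.1 ∩ ball x' r') =>
      infDist (z : Euc N) K) := by
    refine ⟨r', ?_⟩
    rintro v ⟨z, rfl⟩
    exact (infDist_le_dist_of_mem hx'K).trans (le_of_lt z.2.2)
  have key1 : ∀ y ∈ K ∩ ball x' r', |⟪y - x', ν₀.1⟫| < D := by
    intro y hy
    rw [← infDist_hplane hune]
    exact lt_of_le_of_lt ((le_ciSup bdd1 ⟨y, hy⟩).trans (le_max_left _ _)) hν₀
  have hxmem : x ∈ K ∩ ball x' r' := ⟨hxK, mem_ball.2 (by linarith)⟩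
  have keyx : |⟪x - x', ν₀.1⟫| < D := key1 x hxmem
  have hS1 : (⨆ y : ↥(K ∩ ball x r), infDist (y : Euc N) (hplane x ν₀.1)) ≤ 2 * D := by
    refine Real.iSup_le ?_ (by positivity)
    rintro ⟨y, hyK, hyb⟩
    have hyb' : dist y x < r := hyb
    have hymem : y ∈ K ∩ ball x' r' := by
      refine ⟨hyK, mem_ball.2 ?_⟩
      have := dist_triangle y x x'
      linarith
    rw [infDist_hplane hune]
    have hsplit : (y : Euc N) - x = (y - x') - (x - x') := by abel
    calc |⟪y - x, ν₀.1⟫| = |⟪y - x', ν₀.1⟫ - ⟪x - x', ν₀.1⟫| := by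
          rw [hsplit, inner_sub_left]
      _ ≤ |⟪y - x', ν₀.1⟫| + |⟪x - x', ν₀.1⟫| := abs_sub_le_abs_add_abs _ _
      _ ≤ 2 * D := by linarith [key1 y hymem, keyx]
  have hS2 : (⨆ y : ↥(hplane x ν₀.1 ∩ ball x r), infDist (y : Euc N) K) ≤ 2 * D := by
    refine Real.iSup_le ?_ (by positivity)
    rintro ⟨y, hyP, hyb⟩
    have hyb' : dist y x < r := hyb
    set c : ℝ := ⟪x - x', ν₀.1⟫ with hc
    have hyx : ⟪(y : Euc N) - x, ν₀.1⟫ = 0 := hyP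
    have hyc : ⟪(y : Euc N) - x', ν₀.1⟫ = c := by
      have hd : (y : Euc N) - x' = (y - x) + (x - x') := by abel
      rw [hd, inner_add_left, hyx, zero_add]
    set y' : Euc N := (y : Euc N) - c • ν₀.1 with hy'
    have hy'P : y' ∈ hplane x' ν₀.1 := by
      show ⟪y' - x', ν₀.1⟫ = 0
      have hd : y' - x' = ((y : Euc N) - x') - c • ν₀.1 := by rw [hy']; abel
      rw [hd, inner_sub_left, hyc, real_inner_smul_left, real_inner_self_eq_norm_sq, hune]
      ring
    have horth : ⟪y' - x', c • ν₀.1⟫ = 0 := by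
      rw [real_inner_smul_right, hy'P, mul_zero]
    have hdecomp : (y : Euc N) - x' = (y' - x') + c • ν₀.1 := by rw [hy']; abel
    have hnormsq : ‖(y : Euc N) - x'‖ ^ 2 = ‖y' - x'‖ ^ 2 + 2 * ⟪y' - x', c • ν₀.1⟫
        + ‖c • ν₀.1‖ ^ 2 := by rw [hdecomp, norm_add_sq_real]
    rw [horth] at hnormsq
    have hnorm : ‖y' - x'‖ ≤ ‖(y : Euc N) - x'‖ := by
      nlinarith [norm_nonneg (y' - x'), norm_nonneg ((y : Euc N) - x'),
        sq_nonneg (‖c • ν₀.1‖)]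
    have hy'ball : y' ∈ ball x' r' := by
      have h1 : dist (y : Euc N) x' ≤ dist (y : Euc N) x + dist x x' := dist_triangle _ _ _
      have h2 : dist y' x' ≤ dist (y : Euc N) x' := by
        rw [dist_eq_norm, dist_eq_norm]; exact hnorm
      exact mem_ball.2 (by linarith)
    have hiy' : infDist y' K < D :=
      lt_of_le_of_lt ((le_ciSup bdd2 ⟨y', hy'P, hy'ball⟩).trans (le_max_right _ _)) hν₀
    have hdyy' : dist (y : Euc N) y' = |c| := by
      rw [dist_eq_norm, hy']
      have : (y : Euc N) - ((y : Euc N) - c • ν₀.1) = c • ν₀.1 := by abel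
      rw [this, norm_smul, Real.norm_eq_abs, hune, mul_one]
    have hcD : |c| < D := keyx
    calc infDist (y : Euc N) K ≤ infDist y' K + dist (y : Euc N) y' :=
          infDist_le_infDist_add_dist
      _ ≤ D + |c| := by rw [hdyy']; linarith
      _ ≤ 2 * D := by linarith
  calc flatInner K x r ≤ _ := flatInner_le_max hN K x r ν₀
    _ ≤ 2 * D := max_le hS1 hS2
    _ = 2 * e + ε := by rw [hD]; ring

lemma stopR_flat {τ₁ : ℝ} (K : Set (Euc N)) {r₀ : ℝ} (hr₀ : 0 < r₀) (x : Euc N) {t : ℝ}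
    (h1 : stopR τ₁ K r₀ x < t) (h2 : t ≤ r₀ / 4) : flatness K x t ≤ τ₁ := by
  have hne : ({r : ℝ | 0 < r ∧ ∀ t ∈ Icc r (r₀ / 4), flatness K x t ≤ τ₁}).Nonempty := by
    refine ⟨r₀ / 2, by positivity, fun t' ht' => ?_⟩
    exact absurd (ht'.1.trans ht'.2) (by intro h; linarith)
  obtain ⟨s, hsmem, hst⟩ := exists_lt_of_csInf_lt hne h1
  exact hsmem.2 t ⟨hst.le, h2⟩

lemma stopR_nonneg (τ₁ : ℝ) (K : Set (Euc N)) (r₀ : ℝ) (x : Euc N) :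
    0 ≤ stopR τ₁ K r₀ x :=
  Real.sInf_nonneg fun _ hy => hy.1.le

lemma flatness_le_of_flatInner {K : Set (Euc N)} {x : Euc N} {r c : ℝ} (hr : 0 < r)
    (h : flatInner K x r ≤ c * r) : flatness K x r ≤ c := by
  rw [flatness_eq]
  have := mul_le_mul_of_nonneg_left h (inv_nonneg.2 hr.le)
  calc r⁻¹ * flatInner K x r ≤ r⁻¹ * (c * r) := this
    _ = c := by field_simp
  
lemma flatInner_le_of_flatness {K : Set (Euc N)} {x : Euc N} {r c : ℝ} (hr : 0 < r)
    (h : flatness K x r ≤ c) : flatInner K x r ≤ c * r := by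
  rw [flatness_eq] at h
  have := mul_le_mul_of_nonneg_left h hr.le
  calc flatInner K x r = r * (r⁻¹ * flatInner K x r) := by field_simp
    _ ≤ r * c := this
    _ = c * r := mul_comm _ _

lemma add_le_dist_of_disjoint {a b : Euc N} {r s : ℝ} (hr : 0 < r) (hs : 0 < s)
    (h : Disjoint (ball a r) (ball b s)) : r + s ≤ dist a b := by
  by_contra hc
  push_neg at hc
  have hrs : 0 < r + s := by linarith
  set t : ℝ := r / (r + s) with ht
  have ht0 : 0 < t := by positivity
  have ht1 : t < 1 := by rw [ht, div_lt_one hrs]; linarith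
  set c : Euc N := a + t • (b - a) with hcdef
  have hca : dist c a = t * dist a b := by
    rw [dist_eq_norm]
    have h1 : c - a = t • (b - a) := by rw [hcdef]; abel
    rw [h1, norm_smul, Real.norm_eq_abs, abs_of_pos ht0, ← dist_eq_norm, dist_comm]
  have hcb : dist c b = (1 - t) * dist a b := by
    rw [dist_eq_norm]
    have h1 : c - b = (1 - t) • (a - b) := by
      rw [hcdef, sub_smul, one_smul, smul_sub, smul_sub]
      abel
    rw [h1, norm_smul, Real.norm_eq_abs, abs_of_pos (by linarith), ← dist_eq_norm]
  have h1 : c ∈ ball a r := by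
    refine mem_ball.2 ?_
    rw [hca]
    calc t * dist a b < t * (r + s) := by
          exact mul_lt_mul_of_pos_left hc ht0
      _ = r := by rw [ht]; field_simp
  have h2 : c ∈ ball b s := by
    refine mem_ball.2 ?_
    rw [hcb]
    calc (1 - t) * dist a b < (1 - t) * (r + s) := by
          exact mul_lt_mul_of_pos_left hc (by linarith)
      _ = s := by rw [ht]; field_simp; ring
  exact Set.disjoint_left.1 h h1 h2

lemma exists_unit_orthogonal (hN : 2 ≤ N) (ν : Euc N) :
    ∃ w : Euc N, ‖w‖ = 1 ∧ ⟪w, ν⟫ = 0 := by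
  have h0 : (0 : ℕ) < N := by omega
  have h1 : (1 : ℕ) < N := by omega
  set i0 : Fin N := ⟨0, h0⟩
  set i1 : Fin N := ⟨1, h1⟩
  have hne01 : i0 ≠ i1 := by simp [i0, i1, Fin.ext_iff]
  set e0 : Euc N := EuclideanSpace.single i0 (1 : ℝ) with he0
  set e1 : Euc N := EuclideanSpace.single i1 (1 : ℝ) with he1
  by_cases ha : ⟪e0, ν⟫ = 0
  · exact ⟨e0, by rw [he0, EuclideanSpace.norm_single]; norm_num, ha⟩
  · set w' : Euc N := ⟪e1, ν⟫ • e0 - ⟪e0, ν⟫ • e1 with hw'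
    have hw'ν : ⟪w', ν⟫ = 0 := by
      rw [hw', inner_sub_left, real_inner_smul_left, real_inner_smul_left]
      ring
    have hw'0 : w' ≠ 0 := by
      intro h
      have h2 : ⟪w', e1⟫ = 0 := by rw [h, inner_zero_left]
      rw [hw', inner_sub_left, real_inner_smul_left, real_inner_smul_left] at h2
      have he01 : ⟪e0, e1⟫ = (0 : ℝ) := by
        rw [he0, EuclideanSpace.inner_single_left]
        simp [he1, EuclideanSpace.single_apply, hne01]
        
      have he11 : ⟪e1, e1⟫ = (1 : ℝ) := by
        rw [he1, EuclideanSpace.inner_single_left]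
        simp [EuclideanSpace.single_apply]
      rw [he01, he11] at h2
      exact ha (by linarith)
    refine ⟨(‖w'‖⁻¹ : ℝ) • w', ?_, ?_⟩
    · exact norm_smul_inv_norm hw'0
    · rw [real_inner_smul_left, hw'ν, mul_zero]

end Aux

set_option maxHeartbeats 1600000 in
/-- The function `δ` built from the Vitali family of bad balls is a geometric function
with parameters `(3r₀/4, 4τ)`. -/
theorem delta_is_geometric_function (N : ℕ) (hN : 2 ≤ N) (α : ℝ) (hα : 0 < α) :
    ∃ τ A₀ : ℝ, (0 < τ ∧ τ ≤ 1 / 1000000000) ∧ 100000 ≤ A₀ ∧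
      ∀ c_h : ℝ, 0 < c_h → ∀ (Ω : Set (Euc N)), IsOpen Ω →
      ∀ (u : Euc N → Euc N) (K : Set (Euc N)),
        GriffithAM Ω (fun t => c_h * t ^ α) u K →
      ∀ x₀ ∈ K, ∀ r₀ : ℝ, 0 < r₀ → ∀ ε₀ : ℝ, 0 < ε₀ →
        200 * A₀ ^ 2 * ε₀ ≤ τ → HypH Ω K ε₀ x₀ r₀ → c_h * r₀ ^ α ≤ 1 →
      ∀ (I : Type), Countable I → ∀ xc : I → Euc N,
      ∀ ri : I → ℝ, (∀ i, ri i = A₀ ^ 2 * stopR τ K r₀ (xc i)) →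
        (∀ i, xc i ∈ K ∩ closure (ball x₀ (3 * r₀ / 4))) →
        (∀ i, 0 < stopR τ K r₀ (xc i)) →
        (∀ i j, i ≠ j → Disjoint (ball (xc i) (ri i)) (ball (xc j) (ri j))) →
        badRegion τ (A₀ ^ 2) K x₀ r₀ ⊆ ⋃ i, ball (xc i) (4 * ri i) →
      ∀ δ : Euc N → ℝ,
        (δ = fun x => min (⨅ i, (dist x (xc i) + ri i))
          (infDist x (K \ ⋃ i, ball (xc i) (9 * ri i)))) →
        LipschitzOnWith 1 δ (K ∩ closure (ball x₀ (3 * r₀ / 4))) ∧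
        (∀ k, δ (xc k) = ri k) ∧
        (∀ x ∈ K ∩ closure (ball x₀ (3 * r₀ / 4)), δ x ≤ ⨆ k, 10 * ri k) ∧
        (⨆ k, 10 * ri k) ≤ r₀ / 4 ∧
        (∀ x ∈ K ∩ closure (ball x₀ (3 * r₀ / 4)), ∀ r ∈ Set.Ioc (δ x) (r₀ / 4),
          flatness K x r ≤ 4 * τ) ∧
        GeomFn K x₀ r₀ (3 * r₀ / 4) (4 * τ) δ := by
  classical
  refine ⟨1/1000000000, 100000, ⟨by norm_num, le_refl _⟩, le_refl _, ?_⟩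
  intro c_h hch Ω hΩ u K hGAM x₀ hx₀K r₀ hr₀ ε₀ hε₀ hετ hHypH hgauge
    I hI xc ri hri hxc hstop_pos hdisj hcover δ hδ
  have hN0 : 0 < N := by omega
  norm_num at hετ
  -- ε₀ is tiny
  have hεle : ε₀ ≤ 1 / 1600000000000000000000 := by linarith
  have hδx : ∀ x : Euc N, δ x = min (⨅ i, (dist x (xc i) + ri i))
      (infDist x (K \ ⋃ i, ball (xc i) (9 * ri i))) := fun x => by rw [hδ]
  set S : Set (Euc N) := K \ ⋃ i, ball (xc i) (9 * ri i) with hS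
  have hbdd0 : ∀ y : Euc N, BddBelow (Set.range fun i => dist y (xc i) + ri i) := by
    intro y
    refine ⟨0, ?_⟩
    rintro v ⟨i, rfl⟩
    show (0:ℝ) ≤ dist y (xc i) + ri i
    have h1 := hstop_pos i
    have h2 := hri i
    have := dist_nonneg (x := y) (y := xc i)
    linarith
  have hri_pos : ∀ i, 0 < ri i := by
    intro i
    rw [hri i]
    have := hstop_pos i
    positivity
  have hdistx₀ : ∀ x ∈ K ∩ closure (ball x₀ (3 * r₀ / 4)), dist x x₀ ≤ 3 * r₀ / 4 := by
    intro x hx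
    have h3 : (3 * r₀ / 4 : ℝ) ≠ 0 := by positivity
    have := hx.2
    rw [closure_ball x₀ h3] at this
    exact mem_closedBall.1 this
  -- flatness at the top scale
  have hMx₀ : flatInner K x₀ r₀ ≤ ε₀ * r₀ := by
    have h := hHypH.2.2
    rw [flatness_eq] at h
    have hM0 := flatInner_nonneg K x₀ r₀
    calc flatInner K x₀ r₀ = r₀ * (r₀⁻¹ * flatInner K x₀ r₀) := by field_simp
      _ ≤ r₀ * ε₀ := mul_le_mul_of_nonneg_left h hr₀.le
      _ = ε₀ * r₀ := mul_comm _ _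
  -- global flatness estimate at not-too-small scales
  have hglob : ∀ x ∈ K ∩ closure (ball x₀ (3 * r₀ / 4)), ∀ t : ℝ,
      r₀ / 400000000000 ≤ t → t ≤ r₀ / 4 → flatness K x t ≤ 1/1000000000 := by
    intro x hx t ht1 ht2
    have hdist := hdistx₀ x hx
    have ht0 : 0 < t := lt_of_lt_of_le (by positivity) ht1
    have htr : flatInner K x t ≤ 2 * (ε₀ * r₀) := by
      refine (flatInner_transfer hN0 K hx.1 hx₀K ht0
        (show dist x x₀ + t ≤ r₀ by linarith)).trans ?_
      linarith
    apply flatness_le_of_flatInner ht0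
    calc flatInner K x t ≤ 2 * (ε₀ * r₀) := htr
      _ ≤ 2 * (ε₀ * (400000000000 * t)) := by nlinarith
      _ ≤ (1/1000000000) * t := by nlinarith
  have hstopR_le : ∀ x ∈ K ∩ closure (ball x₀ (3 * r₀ / 4)),
      stopR (1/1000000000) K r₀ x ≤ r₀ / 400000000000 := by
    intro x hx
    refine csInf_le ⟨0, fun y hy => hy.1.le⟩ ?_
    exact ⟨by positivity, fun t ht => hglob x hx t ht.1 ht.2⟩
  have hri_le : ∀ i, ri i ≤ r₀ / 40 := by
    intro i
    rw [hri i]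
    have h := hstopR_le _ (hxc i)
    nlinarith [stopR_nonneg (1/1000000000) K r₀ (xc i)]
  -- the set S is nonempty
  have hSne : S.Nonempty := by
    have hMlt : flatInner K x₀ r₀ < 2 * (ε₀ * r₀) := lt_of_le_of_lt hMx₀ (by nlinarith)
    have hnu : Nonempty {ν : Euc N // ‖ν‖ = 1} := unit_nonempty hN0
    rw [show flatInner K x₀ r₀ = _ from rfl] at hMlt
    obtain ⟨ν₀, hν₀⟩ := exists_lt_of_ciInf_lt hMlt
    obtain ⟨w, hw1, hworth⟩ := exists_unit_orthogonal hN ν₀.1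
    set p : Euc N := x₀ + ((79/80) * r₀) • w with hp
    have hpP : p ∈ hplane x₀ ν₀.1 := by
      show ⟪p - x₀, ν₀.1⟫ = 0
      have h1 : p - x₀ = ((79/80) * r₀) • w := by rw [hp]; abel
      rw [h1, real_inner_smul_left, hworth, mul_zero]
    have hpd : dist p x₀ = (79/80) * r₀ := by
      rw [dist_eq_norm]
      have h1 : p - x₀ = ((79/80) * r₀) • w := by rw [hp]; abel
      rw [h1, norm_smul, Real.norm_eq_abs, hw1, mul_one, abs_of_pos (by positivity)]
    have hpball : p ∈ ball x₀ r₀ := mem_ball.2 (by rw [hpd]; linarith)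
    have bdd2 : BddAbove (Set.range fun z : ↥(hplane x₀ ν₀.1 ∩ ball x₀ r₀) =>
        infDist (z : Euc N) K) := by
      refine ⟨r₀, ?_⟩
      rintro v ⟨z, rfl⟩
      exact (infDist_le_dist_of_mem hx₀K).trans (le_of_lt z.2.2)
    have hinf : infDist p K < 2 * (ε₀ * r₀) :=
      lt_of_le_of_lt ((le_ciSup bdd2 ⟨p, hpP, hpball⟩).trans (le_max_right _ _)) hν₀
    obtain ⟨z, hzK, hzd⟩ := (infDist_lt_iff ⟨x₀, hx₀K⟩).1 hinf
    refine ⟨z, hzK, ?_⟩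
    intro hzmem
    obtain ⟨j, hj⟩ := mem_iUnion.1 hzmem
    have h2 : dist z (xc j) < 9 * ri j := mem_ball.1 hj
    have h3 : dist (xc j) x₀ ≤ 3 * r₀ / 4 := hdistx₀ _ (hxc j)
    have h4 : dist p x₀ ≤ dist p z + dist z x₀ := dist_triangle _ _ _
    have h5 : dist z x₀ ≤ dist z (xc j) + dist (xc j) x₀ := dist_triangle _ _ _
    have h6 := hri_le j
    have h7 : ε₀ * r₀ ≤ (1 / 1600000000000000000000) * r₀ :=
      mul_le_mul_of_nonneg_right hεle hr₀.le
    rw [hpd] at h4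
    linarith
  -- basic facts about δ
  have hδ_nonneg : ∀ x : Euc N, 0 ≤ δ x := by
    intro x
    rw [hδx]
    refine le_min (Real.iInf_nonneg fun i => ?_) infDist_nonneg
    have := hri_pos i
    have := dist_nonneg (x := x) (y := xc i)
    linarith
  -- (1) Lipschitz
  have hlip : LipschitzWith 1 δ := by
    apply LipschitzWith.of_le_add
    intro x y
    rw [hδx x, hδx y]
    have hgle : infDist x S ≤ infDist y S + dist x y := infDist_le_infDist_add_dist
    have hfle : (⨅ i, (dist x (xc i) + ri i)) ≤ (⨅ i, (dist y (xc i) + ri i)) + dist x y := by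
      rcases isEmpty_or_nonempty I with hI0 | hI0
      · simp only [Real.iInf_of_isEmpty, zero_add]
        exact dist_nonneg
      · rw [← sub_le_iff_le_add]
        refine le_ciInf fun i => sub_le_iff_le_add.2 ?_
        refine (ciInf_le (hbdd0 x) i).trans ?_
        have := dist_triangle x y (xc i)
        linarith
    calc min (⨅ i, (dist x (xc i) + ri i)) (infDist x S)
        ≤ min ((⨅ i, (dist y (xc i) + ri i)) + dist x y) (infDist y S + dist x y) :=
          min_le_min hfle hgle
      _ = min (⨅ i, (dist y (xc i) + ri i)) (infDist y S) + dist x y :=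
          min_add_add_right _ _ _
  -- (2) δ(x_k) = r_k
  have hδk : ∀ k, δ (xc k) = ri k := by
    intro k
    have hIne : Nonempty I := ⟨k⟩
    rw [hδx]
    have hfk_le : (⨅ i, (dist (xc k) (xc i) + ri i)) ≤ ri k := by
      refine (ciInf_le (hbdd0 (xc k)) k).trans ?_
      simp
    have hfk_ge : ri k ≤ ⨅ i, (dist (xc k) (xc i) + ri i) := by
      refine le_ciInf fun j => ?_
      rcases eq_or_ne k j with rfl | hkj
      · simp
      · have h := add_le_dist_of_disjoint (hri_pos k) (hri_pos j) (hdisj k j hkj)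
        linarith [hri_pos j]
    have hfk : (⨅ i, (dist (xc k) (xc i) + ri i)) = ri k := le_antisymm hfk_le hfk_ge
    rw [hfk]
    refine min_eq_left ?_
    refine le_infDist' hSne fun z hz => ?_
    have hz9 : z ∉ ball (xc k) (9 * ri k) := fun h => hz.2 (mem_iUnion.2 ⟨k, h⟩)
    have h1 : 9 * ri k ≤ dist z (xc k) := by simpa [mem_ball] using hz9
    rw [dist_comm]
    have := hri_pos k
    linarith
  -- (3) δ ≤ sup 10 r_k
  have hsup_nonneg : (0:ℝ) ≤ ⨆ k, 10 * ri k :=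
    Real.iSup_nonneg fun k => by linarith [hri_pos k]
  have hδsup : ∀ x ∈ K ∩ closure (ball x₀ (3 * r₀ / 4)), δ x ≤ ⨆ k, 10 * ri k := by
    intro x hx
    rw [hδx]
    by_cases hxin : ∃ i, x ∈ ball (xc i) (9 * ri i)
    · obtain ⟨i, hi⟩ := hxin
      have hbdd : BddAbove (Set.range fun k => 10 * ri k) := by
        refine ⟨r₀ / 4, ?_⟩
        rintro v ⟨k, rfl⟩
        linarith [hri_le k]
      calc min (⨅ i, (dist x (xc i) + ri i)) (infDist x S)
          ≤ ⨅ i, (dist x (xc i) + ri i) := min_le_left _ _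
        _ ≤ dist x (xc i) + ri i := ciInf_le (hbdd0 x) i
        _ ≤ 10 * ri i := by have := mem_ball.1 hi; linarith
        _ ≤ ⨆ k, 10 * ri k := le_ciSup hbdd i
    · have hxS : x ∈ S := ⟨hx.1, fun h => hxin (mem_iUnion.1 h)⟩
      calc min (⨅ i, (dist x (xc i) + ri i)) (infDist x S)
          ≤ infDist x S := min_le_right _ _
        _ = 0 := infDist_zero_of_mem hxS
        _ ≤ _ := hsup_nonneg
  -- (4) sup 10 r_k ≤ r₀/4
  have hsup4 : (⨆ k, 10 * ri k) ≤ r₀ / 4 :=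
    Real.iSup_le (fun k => by linarith [hri_le k]) (by positivity)
  -- (5) main flatness estimate
  have h5 : ∀ x ∈ K ∩ closure (ball x₀ (3 * r₀ / 4)), ∀ r ∈ Set.Ioc (δ x) (r₀ / 4),
      flatness K x r ≤ 4 * (1/1000000000) := by
    intro x hx r hr
    obtain ⟨hrδ, hr4⟩ := hr
    have hr0 : 0 < r := lt_of_le_of_lt (hδ_nonneg x) hrδ
    rcases lt_or_ge (stopR (1/1000000000) K r₀ x) r with hcase | hcase
    · have := stopR_flat K hr₀ x hcase hr4
      linarith
    rcases le_or_gt (r₀ / 400000000000) r with hbig | hsmall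
    · have := hglob x hx r hbig hr4
      linarith
    have hs0 : 0 < stopR (1/1000000000) K r₀ x := lt_of_lt_of_le hr0 hcase
    have hxbad : x ∈ badRegion (1/1000000000) ((100000:ℝ)^2) K x₀ r₀ := by
      refine mem_biUnion hx ?_
      refine mem_iUnion.2 ⟨hs0, mem_ball_self ?_⟩
      positivity
    obtain ⟨i, hi⟩ := mem_iUnion.1 (hcover hxbad)
    have hIne : Nonempty I := ⟨i⟩
    have hi' : dist x (xc i) < 4 * ri i := mem_ball.1 hi
    have hB : 5 * ri i ≤ infDist x S := by
      refine le_infDist' hSne fun z hz => ?_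
      have hz9 : z ∉ ball (xc i) (9 * ri i) := fun h => hz.2 (mem_iUnion.2 ⟨i, h⟩)
      have h1 : 9 * ri i ≤ dist z (xc i) := by simpa [mem_ball] using hz9
      have h2 : dist z (xc i) ≤ dist z x + dist x (xc i) := dist_triangle _ _ _
      rw [dist_comm]
      linarith
    have hfx_lt : (⨅ j, (dist x (xc j) + ri j)) < r := by
      have hfB : (⨅ j, (dist x (xc j) + ri j)) ≤ dist x (xc i) + ri i :=
        ciInf_le (hbdd0 x) i
      have hmin : δ x = ⨅ j, (dist x (xc j) + ri j) := by
        rw [hδx]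
        exact min_eq_left (by linarith)
      rw [← hmin]
      exact hrδ
    obtain ⟨j, hj⟩ := exists_lt_of_ciInf_lt hfx_lt
    have hrj := hri_pos j
    have hdxj : dist x (xc j) < r := by linarith
    set r' : ℝ := dist x (xc j) + r with hr'
    have hr'0 : 0 < r' := by rw [hr']; linarith [dist_nonneg (x := x) (y := xc j)]
    have hr'2 : r' < 2 * r := by rw [hr']; linarith
    have hr'4 : r' ≤ r₀ / 4 := by
      have : (2:ℝ) * (r₀ / 400000000000) ≤ r₀ / 4 := by linarith
      linarith
    have hstopj : stopR (1/1000000000) K r₀ (xc j) < r' := by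
      have h1 := hri j
      have h2 := hstop_pos j
      have h3 : stopR (1/1000000000) K r₀ (xc j) < ri j := by nlinarith
      have h4 : ri j < r := by linarith [dist_nonneg (x := x) (y := xc j)]
      linarith [dist_nonneg (x := x) (y := xc j)]
    have hflatj := stopR_flat K hr₀ (xc j) hstopj hr'4
    have hMj : flatInner K (xc j) r' ≤ (1/1000000000) * r' :=
      flatInner_le_of_flatness hr'0 hflatj
    have htrans : flatInner K x r ≤ 2 * flatInner K (xc j) r' :=
      flatInner_transfer hN0 K hx.1 (hxc j).1 hr0 (le_of_eq hr'.symm)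
    apply flatness_le_of_flatInner hr0
    calc flatInner K x r ≤ 2 * flatInner K (xc j) r' := htrans
      _ ≤ 2 * ((1/1000000000) * r') := by linarith
      _ ≤ 4 * (1/1000000000) * r := by linarith
  exact ⟨hlip.lipschitzOnWith, hδk, hδsup, hsup4, h5,
    (hlip.weaken (by norm_num)).lipschitzOnWith,
    fun x hx => ⟨hδ_nonneg x, (hδsup x hx).trans hsup4⟩, h5⟩
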